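/- arXiv:2603.01967 — 2 statements merged into one kernel-verified Lean document; each statement's English description precedes it below -/
import Mathlib

section
/- Let G be a graph and X a nonempty simplicial set of G. Then G is perfectly divisible if and only if G − X is perfectly divisible. -/
open SimpleGraph

variable {V : Type}

/-- The clique number of the subgraph of `G` induced on `S`. -/
noncomputable def omegaOn (G : SimpleGraph V) (S : Set V) : ℕ :=
  sSup {n | ∃ s : Finset V, ↑s ⊆ S ∧ G.IsNClique n s}

/-- The subgraph of `G` induced on `S` is a perfect graph. -/
def IsPerfectOn (G : SimpleGraph V) (S : Set V) : Prop :=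
  ∀ T : Set V, T ⊆ S → (G.induce T).chromaticNumber = (omegaOn G T : ℕ∞)

/-- Every nonempty induced subgraph of `G[S]` admits a perfect division. -/
def PerfDivOn (G : SimpleGraph V) (S : Set V) : Prop :=
  ∀ H : Set V, H ⊆ S → H.Nonempty →
    ∃ A B : Set V, A ∪ B = H ∧ Disjoint A B ∧
      IsPerfectOn G A ∧ omegaOn G B < omegaOn G H

/-- `G` is minimally nonperfectly divisible. -/
def MNPD (G : SimpleGraph V) : Prop :=
  ¬ PerfDivOn G Set.univ ∧ ∀ S : Set V, S ≠ Set.univ → PerfDivOn G S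

/-- The external neighbourhood `N(X)`. -/
def extNbhd (G : SimpleGraph V) (X : Set V) : Set V :=
  {v | v ∉ X ∧ ∃ x ∈ X, G.Adj v x}

section aux

set_option linter.unusedSectionVars false

variable [Fintype V] (G : SimpleGraph V)

lemma omega_bddAbove (S : Set V) :
    BddAbove {n | ∃ s : Finset V, ↑s ⊆ S ∧ G.IsNClique n s} := by
  refine ⟨Fintype.card V, fun n hn => ?_⟩
  obtain ⟨s, _, hs⟩ := hn
  rw [← hs.2]
  exact (Finset.card_le_card (Finset.subset_univ s)).trans (le_of_eq (Finset.card_univ))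

lemma omega_set_nonempty (S : Set V) :
    {n | ∃ s : Finset V, ↑s ⊆ S ∧ G.IsNClique n s}.Nonempty :=
  ⟨0, ∅, by simp, by simp [SimpleGraph.isNClique_empty]⟩

lemma le_omega {S : Set V} {n : ℕ} {s : Finset V} (h : ↑s ⊆ S) (hc : G.IsNClique n s) :
    n ≤ omegaOn G S :=
  le_csSup (omega_bddAbove G S) ⟨s, h, hc⟩

lemma omega_mono {S S' : Set V} (h : S ⊆ S') : omegaOn G S ≤ omegaOn G S' :=
  csSup_le_csSup (omega_bddAbove G S') (omega_set_nonempty G S)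
    (fun n ⟨s, hs, hc⟩ => ⟨s, hs.trans h, hc⟩)

lemma exists_omega_clique (S : Set V) :
    ∃ s : Finset V, ↑s ⊆ S ∧ G.IsNClique (omegaOn G S) s :=
  Nat.sSup_mem (omega_set_nonempty G S) (omega_bddAbove G S)

lemma omega_pos {S : Set V} (hS : S.Nonempty) : 1 ≤ omegaOn G S := by
  obtain ⟨v, hv⟩ := hS
  refine le_omega G (s := {v}) (by simp [hv]) ⟨?_, by simp⟩
  intro a ha b hb hne
  simp only [Finset.coe_singleton, Set.mem_singleton_iff] at ha hb
  exact absurd (ha.trans hb.symm) hne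

lemma omega_empty : omegaOn G (∅ : Set V) = 0 := by
  refine le_antisymm (csSup_le (omega_set_nonempty G ∅) ?_) (Nat.zero_le _)
  rintro n ⟨s, hs, hc⟩
  have hse : s = ∅ := by
    ext x; simp only [Finset.notMem_empty, iff_false]
    intro hx; exact (hs hx).elim
  simp [← hc.2, hse]

open Classical in
lemma clique_le_colorable {n m : ℕ} {T : Set V} {s : Finset V} (hsub : ↑s ⊆ T)
    (hc : G.IsNClique m s) (hcol : (G.induce T).Colorable n) : m ≤ n := by
  obtain ⟨C⟩ := hcol
  set t : Finset T := s.subtype (· ∈ T) with ht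
  have htcard : t.card = m := by
    rw [ht, Finset.card_subtype, ← hc.2]
    congr 1
    apply Finset.filter_true_of_mem
    intro x hx; exact hsub hx
  have hinj : Set.InjOn C ↑t := by
    intro a ha b hb hab
    by_contra hne
    have hadj : (G.induce T).Adj a b := by
      simp only [comap_adj, Function.Embedding.coe_subtype]
      refine hc.1 ?_ ?_ (by simpa [Subtype.ext_iff] using hne)
      · simpa using (Finset.mem_subtype.mp ha)
      · simpa using (Finset.mem_subtype.mp hb)
    exact C.valid hadj hab
  calc m = t.card := htcard.symm
    _ = (t.image C).card := (Finset.card_image_of_injOn hinj).symm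
    _ ≤ (Finset.univ : Finset (Fin n)).card := Finset.card_le_card (Finset.subset_univ _)
    _ = n := by simp

lemma omega_le_chromatic {T : Set V} : (omegaOn G T : ℕ∞) ≤ (G.induce T).chromaticNumber := by
  rw [SimpleGraph.chromaticNumber_eq_biInf]
  refine le_iInf₂ fun n hn => ?_
  obtain ⟨s, hs, hc⟩ := exists_omega_clique G T
  exact_mod_cast clique_le_colorable G hs hc hn

open Classical in
lemma colorable_insert {n : ℕ} {S : Set V} {y : V}
    (hy : G.IsClique (G.neighborSet y))
    (hcol : (G.induce S).Colorable n)
    (hω : ∀ s : Finset V, ↑s ⊆ insert y S → G.IsClique ↑s → s.card ≤ n) :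
    (G.induce (insert y S)).Colorable n := by
  obtain ⟨C⟩ := hcol
  -- neighbors of y inside S, as a finset of S
  set nb : Finset S := Finset.univ.filter (fun v : S => G.Adj y ↑v) with hnb
  have hcard : nb.card < n := by
    have hkey : (insert y (nb.image (Subtype.val))).card ≤ n := by
      apply hω
      · intro x hx
        simp only [Finset.coe_insert, Set.mem_insert_iff] at hx
        rcases hx with rfl | hx
        · exact Set.mem_insert _ _
        · simp only [Finset.coe_image, Set.mem_image, Finset.mem_coe] at hx
          obtain ⟨v, _, rfl⟩ := hx
          exact Set.mem_insert_of_mem _ v.2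
      · intro a ha b hb hab
        simp only [Finset.coe_insert, Set.mem_insert_iff, Finset.coe_image, Set.mem_image,
          Finset.mem_coe] at ha hb
        have memnb : ∀ c : V, (c = y ∨ ∃ v ∈ nb, ↑v = c) → c = y ∨ G.Adj y c := by
          rintro c (rfl | ⟨v, hv, rfl⟩)
          · exact Or.inl rfl
          · exact Or.inr ((Finset.mem_filter.mp hv).2)
        rcases memnb a ha with rfl | ha' <;> rcases memnb b hb with rfl | hb'
        · exact absurd rfl hab
        · exact hb'
        · exact ha'.symm
        · exact hy ha' hb' hab
    have hyn : y ∉ nb.image (Subtype.val) := by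
      simp only [Finset.mem_image]
      rintro ⟨v, hv, rfl⟩
      exact G.irrefl ((Finset.mem_filter.mp hv).2)
    have h1 : nb.card + 1 ≤ n := by
      rw [← Finset.card_image_of_injective nb Subtype.val_injective,
        ← Finset.card_insert_of_notMem hyn]
      exact hkey
    omega
  -- find a free color
  obtain ⟨c, hc⟩ : ∃ c : Fin n, c ∉ nb.image C := by
    by_contra h
    push_neg at h
    have hlt : (nb.image C).card < n := lt_of_le_of_lt Finset.card_image_le hcard
    rw [Finset.eq_univ_iff_forall.mpr h] at hlt
    simp at hlt
  have hcfree : ∀ (v : V) (hv : v ∈ S), G.Adj y v → C ⟨v, hv⟩ ≠ c := by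
    intro v hv hadj heq
    exact hc (Finset.mem_image.mpr ⟨⟨v, hv⟩, Finset.mem_filter.mpr ⟨Finset.mem_univ _, hadj⟩, heq⟩)
  -- build the coloring
  refine ⟨SimpleGraph.Coloring.mk
    (fun v => if h : (v : V) ∈ S ∧ (v : V) ≠ y then C ⟨v, h.1⟩ else c) ?_⟩
  rintro ⟨a, ha⟩ ⟨b, hb⟩ hadj
  simp only [comap_adj, Function.Embedding.coe_subtype] at hadj
  by_cases hay : a = y
  · subst hay
    have hby : b ≠ a := fun h => hadj.ne h.symm
    have hbS : b ∈ S := (Set.mem_insert_iff.mp hb).resolve_left hby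
    have hb' : b ∈ S ∧ b ≠ a := ⟨hbS, hby⟩
    have ha' : ¬ ((a : V) ∈ S ∧ a ≠ a) := by simp
    simp only [dif_neg ha', dif_pos hb']
    exact fun heq => hcfree b hbS hadj heq.symm
  · by_cases hby : b = y
    · subst hby
      have haS : a ∈ S := (Set.mem_insert_iff.mp ha).resolve_left hay
      have ha' : a ∈ S ∧ a ≠ b := ⟨haS, hay⟩
      have hb' : ¬ ((b : V) ∈ S ∧ b ≠ b) := by simp
      simp only [dif_pos ha', dif_neg hb']
      exact hcfree a haS hadj.symm
    · have haS : a ∈ S := (Set.mem_insert_iff.mp ha).resolve_left hay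
      have hbS : b ∈ S := (Set.mem_insert_iff.mp hb).resolve_left hby
      simp only [dif_pos (And.intro haS hay), dif_pos (And.intro hbS hby)]
      exact C.valid (by simp only [comap_adj, Function.Embedding.coe_subtype]; exact hadj)

open Classical in
lemma colorable_union_simplicial {n : ℕ} (S : Set V) (Yf : Finset V)
    (hY : ∀ y ∈ Yf, G.IsClique (G.neighborSet y))
    (hcol : (G.induce S).Colorable n)
    (hω : ∀ s : Finset V, ↑s ⊆ S ∪ ↑Yf → G.IsClique ↑s → s.card ≤ n) :
    (G.induce (S ∪ ↑Yf)).Colorable n := by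
  induction Yf using Finset.induction with
  | empty =>
    rw [show S ∪ ↑(∅ : Finset V) = S by simp]
    exact hcol
  | @insert a Yf ha IH =>
    have hstep : S ∪ ↑(insert a Yf) = insert a (S ∪ ↑Yf) := by
      simp [Finset.coe_insert, Set.union_insert]
    have hsub : (S ∪ ↑Yf : Set V) ⊆ S ∪ ↑(insert a Yf) := by
      apply Set.union_subset_union_right
      simp only [Finset.coe_insert]
      exact Set.subset_insert _ _
    have IH' := IH (fun y hy => hY y (Finset.mem_insert_of_mem hy))
      (fun s hs hc => hω s (hs.trans hsub) hc)
    rw [hstep]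
    exact colorable_insert G (hY a (Finset.mem_insert_self a Yf)) IH'
      (fun s hs hc => hω s (by rwa [← hstep] at hs) hc)

open Classical in
lemma isPerfectOn_union {A Y : Set V} (hA : IsPerfectOn G A)
    (hY : ∀ y ∈ Y, G.IsClique (G.neighborSet y)) : IsPerfectOn G (A ∪ Y) := by
  intro T hT
  refine le_antisymm ?_ (omega_le_chromatic G)
  rw [SimpleGraph.chromaticNumber_le_iff_colorable]
  set T1 : Set V := T \ Y with hT1
  have hT1A : T1 ⊆ A := fun x hx => by
    rcases hT hx.1 with h | h
    · exact h
    · exact absurd h hx.2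
  have hcol1 : (G.induce T1).Colorable (omegaOn G T) := by
    have h0 := hA T1 hT1A
    have h1 : (G.induce T1).chromaticNumber ≤ (omegaOn G T : ℕ∞) := by
      rw [h0]
      exact_mod_cast omega_mono G (Set.diff_subset)
    exact SimpleGraph.chromaticNumber_le_iff_colorable.mp h1
  set Yf : Finset V := (T ∩ Y).toFinset with hYf
  have hYfc : (↑Yf : Set V) = T ∩ Y := by simp [hYf]
  have hcover : T1 ∪ ↑Yf = T := by
    rw [hYfc, hT1]
    ext x
    simp only [Set.mem_union, Set.mem_diff, Set.mem_inter_iff]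
    constructor
    · rintro (⟨h, _⟩ | ⟨h, _⟩) <;> exact h
    · intro hx
      by_cases hxY : x ∈ Y
      · exact Or.inr ⟨hx, hxY⟩
      · exact Or.inl ⟨hx, hxY⟩
  have hres := colorable_union_simplicial G T1 Yf
    (fun y hy => hY y (by
      have hym : y ∈ T ∩ Y := by rw [← hYfc]; exact Finset.mem_coe.mpr hy
      exact hym.2))
    hcol1
    (fun s hs hc => le_omega G (by rw [hcover] at hs; exact hs) ⟨hc, rfl⟩)
  rw [hcover] at hres
  exact hres

lemma isPerfectOn_empty : IsPerfectOn G (∅ : Set V) := by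
  intro T hT
  have hTe : T = ∅ := Set.subset_empty_iff.mp hT
  subst hTe
  have : IsEmpty (↥(∅ : Set V)) := ⟨fun x => x.2⟩
  rw [SimpleGraph.chromaticNumber_eq_zero_of_isEmpty, omega_empty]
  simp

end aux

theorem stmt_2 [Fintype V] (G : SimpleGraph V) (X : Set V) (hX : X.Nonempty)
    (hsimp : ∀ x ∈ X, G.IsClique (G.neighborSet x)) :
    PerfDivOn G Set.univ ↔ PerfDivOn G Xᶜ := by
  constructor
  · intro h H hH hne
    exact h H (Set.subset_univ H) hne
  · intro h H _ hne
    rcases Set.eq_empty_or_nonempty (H \ X) with hdiff | hdiff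
    · -- H ⊆ X: take A = H, B = ∅
      have hHX : H ⊆ X := fun x hx => by
        by_contra hxX
        exact Set.eq_empty_iff_forall_notMem.mp hdiff x ⟨hx, hxX⟩
      refine ⟨H, ∅, by simp, by simp, ?_, ?_⟩
      · have hres := isPerfectOn_union G (isPerfectOn_empty G)
          (fun y (hy : y ∈ H) => hsimp y (hHX hy))
        simpa using hres
      · rw [omega_empty]
        exact omega_pos G hne
    · obtain ⟨A, B, hAB, hdisj, hperf, hω⟩ := h (H \ X)
        (fun x hx => hx.2) hdiff
      refine ⟨A ∪ (H ∩ X), B, ?_, ?_, ?_, ?_⟩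
      · rw [Set.union_right_comm, hAB]
        ext x
        simp only [Set.mem_union, Set.mem_diff, Set.mem_inter_iff]
        constructor
        · rintro (⟨h1, _⟩ | ⟨h1, _⟩) <;> exact h1
        · intro hx
          by_cases hxX : x ∈ X
          · exact Or.inr ⟨hx, hxX⟩
          · exact Or.inl ⟨hx, hxX⟩
      · refine Set.disjoint_union_left.mpr ⟨hdisj, ?_⟩
        have hB : B ⊆ H \ X := hAB ▸ Set.subset_union_right
        exact Set.disjoint_left.mpr fun x hx hxB => (hB hxB).2 hx.2
      · exact isPerfectOn_union G hperf (fun y hy => hsimp y hy.2)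
      · exact lt_of_lt_of_le hω (omega_mono G Set.diff_subset)
end

section
/- Let G be a graph, X ⊆ V(G), and (X₁, X₂, …, X_k) a simplicial decomposition of G[X]. Then G[X] is perfect if and only if G[X₁] is perfect. -/
open SimpleGraph

variable {V : Type}

lemma omegaOn_bddAbove [Fintype V] (G : SimpleGraph V) (T : Set V) :
    BddAbove {n | ∃ s : Finset V, ↑s ⊆ T ∧ G.IsNClique n s} := by
  refine ⟨Fintype.card V, ?_⟩
  rintro n ⟨s, -, hs⟩
  rw [← hs.2]
  simpa using s.card_le_univ

lemma omegaOn_set_nonempty (G : SimpleGraph V) (T : Set V) :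
    Set.Nonempty {n | ∃ s : Finset V, ↑s ⊆ T ∧ G.IsNClique n s} :=
  ⟨0, ∅, by simp, by simp⟩

lemma le_omegaOn [Fintype V] {G : SimpleGraph V} {T : Set V} {n : ℕ} {s : Finset V}
    (hsub : ↑s ⊆ T) (hcl : G.IsNClique n s) : n ≤ omegaOn G T :=
  le_csSup (omegaOn_bddAbove G T) ⟨s, hsub, hcl⟩

lemma omegaOn_mono [Fintype V] {G : SimpleGraph V} {T T' : Set V} (h : T' ⊆ T) :
    omegaOn G T' ≤ omegaOn G T := by
  refine csSup_le (omegaOn_set_nonempty G T') ?_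
  rintro n ⟨s, h1, h2⟩
  exact le_omegaOn (h1.trans h) h2

lemma exists_omegaOn [Fintype V] (G : SimpleGraph V) (T : Set V) :
    ∃ s : Finset V, ↑s ⊆ T ∧ G.IsNClique (omegaOn G T) s :=
  Nat.sSup_mem (omegaOn_set_nonempty G T) (omegaOn_bddAbove G T)

lemma omegaOn_le_chromatic [Fintype V] (G : SimpleGraph V) (T : Set V) :
    (omegaOn G T : ℕ∞) ≤ (G.induce T).chromaticNumber := by
  obtain ⟨s, hsub, hcl⟩ := exists_omegaOn G T
  set t : Finset T := s.attach.map ⟨fun x => ⟨x.1, hsub x.2⟩, fun a b hab => by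
    ext; have h := congrArg Subtype.val hab; exact h⟩ with ht
  have hclt : (G.induce T).IsClique (t : Set T) := by
    intro a ha b hb hab
    simp only [ht, Finset.coe_map, Set.mem_image, Finset.mem_coe, Finset.mem_attach] at ha hb
    obtain ⟨a', -, rfl⟩ := ha
    obtain ⟨b', -, rfl⟩ := hb
    have : G.Adj a' b' := hcl.1 a'.2 b'.2 (by simpa using fun h => hab (by rw [h]))
    exact this
  have := hclt.card_le_chromaticNumber
  rwa [ht, Finset.card_map, Finset.card_attach, hcl.2] at this

lemma key_lemma [Fintype V] (G : SimpleGraph V) (S : Set V) (k : ℕ) (hk : 1 ≤ k)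
    (X : ℕ → Set V)
    (hUnion : (⋃ i < k, X i) = S)
    (hSimp : ∀ i, i + 1 < k → ∀ x ∈ X (i + 1),
      G.IsClique {z | z ∈ (⋃ j ≤ i + 1, X j) ∧ G.Adj x z})
    (h0 : IsPerfectOn G (X 0)) :
    ∀ n : ℕ, ∀ T : Set V, T ⊆ S → T.ncard ≤ n →
      (G.induce T).chromaticNumber = (omegaOn G T : ℕ∞) := by
  classical
  intro n
  induction n with
  | zero =>
    intro T hT hcard
    have : T = ∅ := by
      rw [← Set.ncard_eq_zero (Set.toFinite T)]
      omega
    subst this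
    exact h0 ∅ (Set.empty_subset _)
  | succ n ih =>
    intro T hT hcard
    rcases T.eq_empty_or_nonempty with rfl | hTne
    · exact h0 ∅ (Set.empty_subset _)
    -- find the greatest index i ≤ k-1 with X i ∩ T nonempty
    set i := Nat.findGreatest (fun j => (X j ∩ T).Nonempty) (k - 1) with hi
    obtain ⟨t0, ht0⟩ := hTne
    obtain ⟨j0, hj0k, hj0⟩ : ∃ j < k, t0 ∈ X j := by
      have := hT ht0
      rw [← hUnion] at this
      simpa using this
    have hbase : (X j0 ∩ T).Nonempty := ⟨t0, hj0, ht0⟩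
    have hj0le : j0 ≤ k - 1 := by omega
    have hPi : (X i ∩ T).Nonempty := by
      rw [hi]
      exact Nat.findGreatest_spec (P := fun j => (X j ∩ T).Nonempty) hj0le hbase
    have hTsub : T ⊆ ⋃ j ≤ i, X j := by
      intro t ht
      obtain ⟨j, hjk, hj⟩ : ∃ j < k, t ∈ X j := by
        have := hT ht
        rw [← hUnion] at this
        simpa using this
      have hji : j ≤ i := by
        by_contra hji
        push_neg at hji
        rw [hi] at hji
        exact Nat.findGreatest_is_greatest (P := fun j => (X j ∩ T).Nonempty)
          hji (by omega) ⟨t, hj, ht⟩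
      exact Set.mem_biUnion hji hj
    rcases Nat.eq_zero_or_eq_succ_pred i with hi0 | him
    · -- all of T lies in X 0
      have : T ⊆ X 0 := by
        intro t ht
        have := hTsub ht
        rw [hi0] at this
        simpa using this
      exact h0 T this
    · set m := i - 1 with hm
      have him' : i = m + 1 := by omega
      have hik : i < k := lt_of_le_of_lt (Nat.findGreatest_le _) (by omega)
      obtain ⟨v, hvX, hvT⟩ := hPi
      -- the neighbourhood of v inside T is a clique
      have hsimpv : G.IsClique {z | z ∈ (⋃ j ≤ m + 1, X j) ∧ G.Adj v z} :=
        hSimp m (by omega) v (by rwa [← him'])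
      set N : Set V := {z | z ∈ T ∧ G.Adj v z} with hN
      have hNsub : N ⊆ {z | z ∈ (⋃ j ≤ m + 1, X j) ∧ G.Adj v z} := by
        rintro z ⟨hzT, hzadj⟩
        exact ⟨by rw [← him']; exact hTsub hzT, hzadj⟩
      have hNclique : G.IsClique N := hsimpv.subset hNsub
      have hvN : v ∉ N := fun h => G.irrefl h.2
      set T' : Set V := T \ {v} with hT'
      have hT'sub : T' ⊆ S := (Set.diff_subset).trans hT
      have hT'card : T'.ncard ≤ n := by
        have : T'.ncard < T.ncard :=
          Set.ncard_lt_ncard (by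
            constructor
            · exact Set.diff_subset
            · intro h
              exact (h hvT).2 rfl) (Set.toFinite T)
        omega
      have ihT' := ih T' hT'sub hT'card
      set w : ℕ := omegaOn G T with hw
      have hw1 : 1 ≤ w := le_omegaOn (s := {v}) (by simpa using hvT)
        ⟨by simp, by simp⟩
      have hT'le : omegaOn G T' ≤ w := omegaOn_mono Set.diff_subset
      -- get a coloring of T' with w colors
      have hcolT' : (G.induce T').Colorable w := by
        rw [← chromaticNumber_le_iff_colorable, ihT']
        exact_mod_cast hT'le
      obtain ⟨C⟩ := hcolT'
      have hNT' : N ⊆ T' := by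
        rintro z ⟨hzT, hzadj⟩
        exact ⟨hzT, fun h => G.irrefl (h ▸ hzadj)⟩
      -- the clique N ∪ {v} has size |N| + 1 ≤ w
      set Nf : Finset V := (Set.toFinite N).toFinset with hNf
      have hNfmem : ∀ {z}, z ∈ Nf ↔ z ∈ N := by
        intro z; simp [hNf, hN]
      have hvNf : v ∉ Nf := fun h => hvN (hNfmem.mp h)
      have hinsclique : G.IsNClique (Nf.card + 1) (insert v Nf) := by
        constructor
        · have : G.IsClique (insert v (N : Set V)) :=
            hNclique.insert (fun b hb _ => hb.2)
          refine this.subset ?_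
          intro z hz
          simp only [Finset.coe_insert, Set.mem_insert_iff] at hz ⊢
          rcases hz with h | h
          · exact Or.inl h
          · exact Or.inr (hNfmem.mp h)
        · rw [Finset.card_insert_of_notMem hvNf]
      have hNfcard : Nf.card + 1 ≤ w := by
        refine le_omegaOn ?_ hinsclique
        intro z hz
        simp only [Finset.coe_insert, Set.mem_insert_iff, Finset.mem_coe] at hz
        rcases hz with rfl | h
        · exact hvT
        · exact (hNfmem.mp h).1
      -- colors used by v's neighbours
      set used : Finset (Fin w) :=
        Nf.attach.image (fun z => C ⟨z.1, hNT' (hNfmem.mp z.2)⟩) with hused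
      have husedcard : used.card < w := by
        calc used.card ≤ Nf.attach.card := Finset.card_image_le
          _ = Nf.card := Finset.card_attach
          _ < w := by omega
      obtain ⟨a, ha⟩ : ∃ a : Fin w, a ∉ used := by
        by_contra h
        push_neg at h
        have : (Finset.univ : Finset (Fin w)).card ≤ used.card :=
          Finset.card_le_card (fun a _ => h a)
        simp only [Finset.card_univ, Fintype.card_fin] at this
        omega
      -- extend the coloring
      set c' : T → Fin w := fun x =>
        if h : (x : V) = v then a else C ⟨x.1, ⟨x.2, h⟩⟩ with hc'
      have hvalid : ∀ {x y : T}, (G.induce T).Adj x y → c' x ≠ c' y := by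
        intro x y hxy
        have hadj : G.Adj x.1 y.1 := hxy
        by_cases hx : (x : V) = v <;> by_cases hy : (y : V) = v
        · exact absurd (hy ▸ hx ▸ hadj) (G.irrefl)
        · -- x = v, y ≠ v : c' x = a, c' y ∈ used
          have hyN : (y : V) ∈ Nf := hNfmem.mpr ⟨y.2, hx ▸ hadj⟩
          simp only [hc', dif_pos hx, dif_neg hy]
          intro hcontr
          apply ha
          rw [hused, Finset.mem_image]
          exact ⟨⟨y.1, hyN⟩, Finset.mem_attach _ _, hcontr.symm⟩
        · have hxN : (x : V) ∈ Nf := hNfmem.mpr ⟨x.2, hy ▸ hadj.symm⟩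
          simp only [hc', dif_neg hx, dif_pos hy]
          intro hcontr
          apply ha
          rw [hused, Finset.mem_image]
          exact ⟨⟨x.1, hxN⟩, Finset.mem_attach _ _, hcontr⟩
        · simp only [hc', dif_neg hx, dif_neg hy]
          exact C.valid (by simpa using hadj)
      have hcolT : (G.induce T).Colorable w := ⟨Coloring.mk c' hvalid⟩
      refine le_antisymm ?_ (omegaOn_le_chromatic G T)
      exact hcolT.chromaticNumber_le

theorem stmt_3 [Fintype V] (G : SimpleGraph V) (S : Set V) (k : ℕ) (hk : 1 ≤ k)
    (X : ℕ → Set V)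
    (hUnion : (⋃ i < k, X i) = S)
    (hDisj : ∀ i < k, ∀ j < k, i ≠ j → Disjoint (X i) (X j))
    (hSimp : ∀ i, i + 1 < k → ∀ x ∈ X (i + 1),
      G.IsClique {z | z ∈ (⋃ j ≤ i + 1, X j) ∧ G.Adj x z}) :
    IsPerfectOn G S ↔ IsPerfectOn G (X 0) := by
  constructor
  · intro hS T hT
    have hX0S : X 0 ⊆ S := by
      rw [← hUnion]
      intro x hx
      exact Set.mem_biUnion (show 0 < k from hk) hx
    exact hS T (hT.trans hX0S)
  · intro h0 T hT
    exact key_lemma G S k hk X hUnion hSimp h0 T.ncard T hT le_rfl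
end
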